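/- Let h be a self-adjoint operator on L²(Q,μ) bounded from below such that e^{-th} is positivity preserving for every t > 0. Then for every f in the domain of h, the absolute value |f| lies in the form domain Q(h) and the quadratic form satisfies (|f|, h|f|) ≤ ⟨f, hf⟩. -/

import Mathlib

open MeasureTheory Filter Topology

/-- The semigroup `P t = e^{-t h}` of a self-adjoint operator `h` on `L²(Q,μ)` that is
bounded from below and whose semigroup is positivity preserving for all `t > 0`. -/
structure HeatSemigroup {Q : Type*} [MeasurableSpace Q] (μ : Measure Q) where
  P : ℝ → (Lp ℝ 2 μ →L[ℝ] Lp ℝ 2 μ)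
  selfAdj : ∀ t > 0, ∀ u v : Lp ℝ 2 μ, (inner ℝ (P t u) v : ℝ) = inner ℝ u (P t v)
  posPres : ∀ t > 0, ∀ u : Lp ℝ 2 μ, 0 ≤ u → 0 ≤ P t u
  semigroup : ∀ s > 0, ∀ t > 0, P (s + t) = (P s).comp (P t)
  /-- semiboundedness of `h` (i.e. `h ≥ -b`) at the semigroup level -/
  bddBelow : ∃ b : ℝ, ∀ t > 0, ‖P t‖ ≤ Real.exp (t * b)

lemma excess_nonpos {e : ℝ → ℝ} {t : ℝ} (ht : 0 < t)
    (hemid : ∀ x, 0 ≤ x → ∀ y, 0 ≤ y → e ((x + y) / 2) ≤ (e x + e y) / 2)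
    (he0 : e 0 = 0) (het : e t = 0)
    (M : ℝ) (hM : ∀ x ∈ Set.Icc (0:ℝ) t, e x ≤ M)
    {s : ℝ} (hs0 : 0 ≤ s) (hst : s ≤ t) :
    e s ≤ 0 := by
  by_contra hd
  push_neg at hd
  have key : ∀ n : ℕ, ∃ x, x ∈ Set.Icc 0 t ∧ 2 ^ n * e s ≤ e x := by
    intro n; induction n with
    | zero => exact ⟨s, ⟨hs0, hst⟩, by norm_num⟩
    | succ n ih =>
      obtain ⟨x, ⟨hx0, hxt⟩, hx⟩ := ih
      rcases le_or_gt (2 * x) t with hcase | hcase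
      · refine ⟨2 * x, ⟨by linarith, hcase⟩, ?_⟩
        have h1 := hemid 0 le_rfl (2 * x) (by linarith)
        rw [show (0 + 2 * x) / 2 = x by ring, he0] at h1
        calc (2:ℝ) ^ (n + 1) * e s = 2 * (2 ^ n * e s) := by ring
          _ ≤ 2 * e x := by linarith
          _ ≤ e (2 * x) := by linarith
      · refine ⟨2 * x - t, ⟨by linarith, by linarith⟩, ?_⟩
        have h1 := hemid t ht.le (2 * x - t) (by linarith)
        rw [show (t + (2 * x - t)) / 2 = x by ring, het] at h1
        calc (2:ℝ) ^ (n + 1) * e s = 2 * (2 ^ n * e s) := by ring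
          _ ≤ 2 * e x := by linarith
          _ ≤ e (2 * x - t) := by linarith
  obtain ⟨n, hn⟩ := pow_unbounded_of_one_lt (M / e s) (one_lt_two (α := ℝ))
  obtain ⟨x, hxI, hx⟩ := key n
  have hex := hM x hxI
  rw [div_lt_iff₀ hd] at hn
  linarith

lemma midpoint_chord {F : ℝ → ℝ} {t : ℝ} (ht : 0 < t)
    (hmid : ∀ x, 0 ≤ x → ∀ y, 0 ≤ y → F ((x + y) / 2) ≤ (F x + F y) / 2)
    (M : ℝ) (hM : ∀ x ∈ Set.Icc (0:ℝ) t, F x ≤ M)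
    {s : ℝ} (hs0 : 0 ≤ s) (hst : s ≤ t) :
    F s ≤ (1 - s / t) * F 0 + (s / t) * F t := by
  have h := excess_nonpos (e := fun x => F x - ((1 - x / t) * F 0 + (x / t) * F t)) ht
    (fun x hx y hy => by have h := hmid x hx y hy; ring_nf at h ⊢; linarith)
    (by simp) (by field_simp; simp)
    (M + |F 0| + |F t|)
    (fun x hxI => by
      have hxd : 0 ≤ x / t := div_nonneg hxI.1 ht.le
      have hxd1 : x / t ≤ 1 := (div_le_one ht).mpr hxI.2
      have := hM x hxI
      nlinarith [neg_abs_le (F 0), le_abs_self (F 0), neg_abs_le (F t), le_abs_self (F t)])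
    hs0 hst
  linarith

set_option maxHeartbeats 2000000 in
/-- Let `h` be a semibounded self-adjoint operator on `L²(Q,μ)` with
positivity-preserving semigroup `e^{-th}`.  If `f ∈ dom h` (encoded by the norm convergence of
`t⁻¹ (f - e^{-th} f)` to `v = h f` as `t → 0⁺`), then `|f|` lies in the form domain `Q(h)`
(i.e. `t⁻¹ ⟨|f|, (1 - e^{-th})|f|⟩` converges as `t → 0⁺`), and the quadratic form value
satisfies `(|f|, h |f|) ≤ ⟨f, h f⟩`. -/
theorem stmt3 {Q : Type*} [MeasurableSpace Q] (μ : Measure Q) [SigmaFinite μ]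
    (H : HeatSemigroup μ) (f v : Lp ℝ 2 μ)
    (hf : Tendsto (fun t : ℝ => t⁻¹ • (f - H.P t f)) (nhdsWithin 0 (Set.Ioi 0)) (nhds v)) :
    ∃ q : ℝ,
      Tendsto (fun t : ℝ => (inner ℝ |f| (|f| - H.P t |f|) : ℝ) / t)
        (nhdsWithin 0 (Set.Ioi 0)) (nhds q) ∧
      q ≤ (inner ℝ f v : ℝ) := by
  classical
  obtain ⟨b, hb⟩ := H.bddBelow
  -- inner product of nonnegative elements is nonnegative
  have inner_nn : ∀ w z : Lp ℝ 2 μ, 0 ≤ w → 0 ≤ z → 0 ≤ (inner ℝ w z : ℝ) := by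
    intro w z hw hz
    rw [L2.inner_def]
    refine integral_nonneg_of_ae ?_
    filter_upwards [(Lp.coeFn_nonneg w).mpr hw, (Lp.coeFn_nonneg z).mpr hz] with a ha hb'
    simpa [RCLike.inner_apply] using mul_nonneg hb' ha
  set u : Lp ℝ 2 μ := |f| with hu
  set A : ℝ := (inner ℝ u u : ℝ) with hA
  have hA' : A = ‖u‖ ^ 2 := real_inner_self_eq_norm_sq u
  have hAf : A = (inner ℝ f f : ℝ) := by
    rw [hA', real_inner_self_eq_norm_sq, hu, norm_abs_eq_norm]
  have hA0 : 0 ≤ A := real_inner_self_nonneg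
  -- comparison of inner products
  have hcmp : ∀ t : ℝ, 0 < t → (inner ℝ f (H.P t f) : ℝ) ≤ (inner ℝ u (H.P t u) : ℝ) := by
    intro t ht
    have ha := posPart_nonneg f
    have hbn := negPart_nonneg f
    have h1 : 0 ≤ (inner ℝ (f⁺) (H.P t (f⁻)) : ℝ) := inner_nn _ _ ha (H.posPres t ht _ hbn)
    have h2 : 0 ≤ (inner ℝ (f⁻) (H.P t (f⁺)) : ℝ) := inner_nn _ _ hbn (H.posPres t ht _ ha)
    have expand : (inner ℝ (f⁺ - f⁻) (H.P t (f⁺ - f⁻)) : ℝ)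
        ≤ (inner ℝ (f⁺ + f⁻) (H.P t (f⁺ + f⁻)) : ℝ) := by
      rw [map_sub, map_add, inner_sub_left, inner_add_left, inner_sub_right, inner_sub_right,
        inner_add_right, inner_add_right]
      linarith
    rwa [posPart_sub_negPart, posPart_add_negPart, ← hu] at expand
  -- the function F
  set F : ℝ → ℝ := fun t => if 0 < t then (inner ℝ u (H.P t u) : ℝ) else A with hF
  have hFpos : ∀ t : ℝ, 0 < t → F t = (inner ℝ u (H.P t u) : ℝ) := fun t ht => if_pos ht
  have hF0 : F 0 = A := if_neg (lt_irrefl 0)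
  have hsg : ∀ s : ℝ, 0 < s → ∀ w : Lp ℝ 2 μ, H.P (s + s) w = H.P s (H.P s w) := by
    intro s hs w
    rw [H.semigroup s hs s hs]
    rfl
  have hnormsq : ∀ s : ℝ, 0 < s → F (s + s) = ‖H.P s u‖ ^ 2 := by
    intro s hs
    rw [hFpos _ (by linarith), hsg s hs, ← H.selfAdj s hs, real_inner_self_eq_norm_sq]
  -- midpoint convexity of F on [0, ∞)
  have hFmid : ∀ x, 0 ≤ x → ∀ y, 0 ≤ y → F ((x + y) / 2) ≤ (F x + F y) / 2 := by
    have base : ∀ y : ℝ, 0 < y → F ((0 + y) / 2) ≤ (F 0 + F y) / 2 := by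
      intro y hy0
      have hy2 : 0 < y / 2 := half_pos hy0
      have hFy : F y = ‖H.P (y / 2) u‖ ^ 2 := by
        have hh := hnormsq (y / 2) hy2
        rwa [add_halves] at hh
      have heq : F ((0 + y) / 2) = (inner ℝ u (H.P (y / 2) u) : ℝ) := by
        rw [show (0 + y) / 2 = y / 2 by ring, hFpos _ hy2]
      have hle := real_inner_le_norm u (H.P (y / 2) u)
      rw [heq, hF0, hFy, hA']
      nlinarith [sq_nonneg (‖u‖ - ‖H.P (y / 2) u‖)]
    intro x hx y hy
    rcases eq_or_lt_of_le hx with hx0 | hx0 <;> rcases eq_or_lt_of_le hy with hy0 | hy0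
    · rw [← hx0, ← hy0]; norm_num
    · rw [← hx0]; exact base y hy0
    · rw [← hy0, show (x + 0) / 2 = (0 + x) / 2 by ring]
      linarith [base x hx0]
    · have hx2 : 0 < x / 2 := half_pos hx0
      have hy2 : 0 < y / 2 := half_pos hy0
      have hFx : F x = ‖H.P (x / 2) u‖ ^ 2 := by
        have hh := hnormsq (x / 2) hx2
        rwa [add_halves] at hh
      have hFy : F y = ‖H.P (y / 2) u‖ ^ 2 := by
        have hh := hnormsq (y / 2) hy2
        rwa [add_halves] at hh
      have heq : F ((x + y) / 2) = (inner ℝ (H.P (x / 2) u) (H.P (y / 2) u) : ℝ) := by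
        rw [show (x + y) / 2 = x / 2 + y / 2 by ring, hFpos _ (by linarith),
          H.semigroup (x / 2) hx2 (y / 2) hy2]
        exact (H.selfAdj (x / 2) hx2 u (H.P (y / 2) u)).symm
      have hle := real_inner_le_norm (H.P (x / 2) u) (H.P (y / 2) u)
      rw [heq, hFx, hFy]
      nlinarith [sq_nonneg (‖H.P (x / 2) u‖ - ‖H.P (y / 2) u‖)]
  -- boundedness of F on [0,T]
  have hFbound : ∀ T : ℝ, 0 < T → ∀ x ∈ Set.Icc (0:ℝ) T, F x ≤ Real.exp (T * |b|) * A + A := by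
    intro T hT x hxI
    obtain ⟨hx0, hxT⟩ := hxI
    have hexp0 : 0 ≤ Real.exp (T * |b|) * A := mul_nonneg (Real.exp_pos _).le hA0
    rcases eq_or_lt_of_le hx0 with h | h
    · rw [← h, hF0]; linarith
    · rw [hFpos _ h]
      have hop : ‖H.P x u‖ ≤ Real.exp (x * b) * ‖u‖ := by
        calc ‖H.P x u‖ ≤ ‖H.P x‖ * ‖u‖ := (H.P x).le_opNorm u
          _ ≤ Real.exp (x * b) * ‖u‖ := by
              have := hb x h
              exact mul_le_mul_of_nonneg_right this (norm_nonneg u)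
      have hexp : Real.exp (x * b) ≤ Real.exp (T * |b|) := by
        apply Real.exp_le_exp.mpr
        calc x * b ≤ x * |b| := mul_le_mul_of_nonneg_left (le_abs_self b) h.le
          _ ≤ T * |b| := mul_le_mul_of_nonneg_right hxT (abs_nonneg b)
      have hle := real_inner_le_norm u (H.P x u)
      have hPn : 0 ≤ ‖H.P x u‖ := norm_nonneg _
      have hun : 0 ≤ ‖u‖ := norm_nonneg _
      have : (inner ℝ u (H.P x u) : ℝ) ≤ Real.exp (T * |b|) * ‖u‖ ^ 2 := by
        nlinarith [Real.exp_pos (x * b), Real.exp_pos (T * |b|)]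
      rw [hA'] at hexp0 ⊢
      linarith
  -- monotonicity of the quotient
  have hmono : ∀ s t : ℝ, 0 < s → s ≤ t → (A - F t) / t ≤ (A - F s) / s := by
    intro s t hs hst
    have ht : 0 < t := lt_of_lt_of_le hs hst
    have hch := midpoint_chord ht hFmid _ (hFbound t ht) hs.le hst
    rw [hF0] at hch
    have key : F s * t ≤ (t - s) * A + s * F t := by
      have h2 := mul_le_mul_of_nonneg_right hch ht.le
      have h3 : ((1 - s / t) * A + s / t * F t) * t = (t - s) * A + s * F t := by
        field_simp
      rw [h3] at h2
      linarith
    rw [div_le_div_iff₀ ht hs]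
    nlinarith
  -- the functions g and h
  set g : ℝ → ℝ := fun t => (inner ℝ u (u - H.P t u) : ℝ) / t with hg
  set h : ℝ → ℝ := fun t => (inner ℝ f (f - H.P t f) : ℝ) / t with hh'
  have hgF : ∀ t : ℝ, 0 < t → g t = (A - F t) / t := by
    intro t ht
    have hnum : (inner ℝ u (u - H.P t u) : ℝ) = A - F t := by
      rw [inner_sub_right, hFpos t ht, ← hA]
    rw [hg]
    simp only
    rw [hnum]
  have hmonog : ∀ s t : ℝ, 0 < s → s ≤ t → g t ≤ g s := by
    intro s t hs hst
    rw [hgF s hs, hgF t (lt_of_lt_of_le hs hst)]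
    exact hmono s t hs hst
  have hgh : ∀ t : ℝ, 0 < t → g t ≤ h t := by
    intro t ht
    have h1 : (inner ℝ u (u - H.P t u) : ℝ) ≤ (inner ℝ f (f - H.P t f) : ℝ) := by
      rw [inner_sub_right, inner_sub_right]
      have := hcmp t ht
      rw [← hA, ← hAf]
      linarith
    rw [hg, hh']
    exact (div_le_div_iff_of_pos_right ht).mpr h1
  -- convergence of h
  have hhT : Tendsto h (nhdsWithin 0 (Set.Ioi 0)) (nhds ((inner ℝ f v : ℝ))) := by
    have h2 : Tendsto (fun t : ℝ => (inner ℝ f (t⁻¹ • (f - H.P t f)) : ℝ))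
        (nhdsWithin 0 (Set.Ioi 0)) (nhds ((inner ℝ f v : ℝ))) :=
      (tendsto_const_nhds : Tendsto (fun _ : ℝ => f) _ _).inner hf
    refine h2.congr' ?_
    filter_upwards [self_mem_nhdsWithin] with t (ht : (0:ℝ) < t)
    rw [hh']
    simp only
    rw [real_inner_smul_right, div_eq_inv_mul]
  set L : ℝ := (inner ℝ f v : ℝ) with hL
  -- uniform upper bound for g
  have hgle : ∀ t : ℝ, 0 < t → g t ≤ L + 1 := by
    intro t ht
    have hmem : Set.Ioo (0:ℝ) t ∈ nhdsWithin (0:ℝ) (Set.Ioi 0) :=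
      Ioo_mem_nhdsGT_of_mem ⟨le_refl 0, ht⟩
    have hev : ∀ᶠ s in nhdsWithin (0:ℝ) (Set.Ioi 0), h s < L + 1 :=
      hhT.eventually (eventually_lt_nhds (lt_add_one L))
    obtain ⟨s, hs1, hs2⟩ := (hev.and (eventually_of_mem hmem (fun x hx => hx))).exists
    calc g t ≤ g s := hmonog s t hs2.1 hs2.2.le
      _ ≤ h s := hgh s hs2.1
      _ ≤ L + 1 := hs1.le
  have hne : (g '' Set.Ioi 0).Nonempty := ⟨g 1, Set.mem_image_of_mem g (by norm_num)⟩
  have hbdd : BddAbove (g '' Set.Ioi 0) := by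
    refine ⟨L + 1, fun y hy => ?_⟩
    obtain ⟨t, ht, rfl⟩ := hy
    exact hgle t ht
  set q : ℝ := sSup (g '' Set.Ioi 0) with hq
  have hgq : ∀ t : ℝ, 0 < t → g t ≤ q := fun t ht =>
    le_csSup hbdd (Set.mem_image_of_mem g ht)
  have htend : Tendsto g (nhdsWithin 0 (Set.Ioi 0)) (nhds q) := by
    rw [Metric.tendsto_nhdsWithin_nhds]
    intro ε hε
    obtain ⟨y, hy1, hy2⟩ := exists_lt_of_lt_csSup hne (show q - ε < q by linarith)
    obtain ⟨t₀, ht₀, rfl⟩ := hy1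
    refine ⟨t₀, ht₀, fun x hx hdx => ?_⟩
    have hx0 : (0:ℝ) < x := hx
    rw [Real.dist_eq, sub_zero] at hdx
    have hxt : x ≤ t₀ := le_of_lt (lt_of_abs_lt hdx)
    have hgx1 : g t₀ ≤ g x := hmonog x t₀ hx0 hxt
    have hgx2 : g x ≤ q := hgq x hx0
    rw [Real.dist_eq]
    rw [abs_lt]
    constructor <;> linarith
  refine ⟨q, htend, ?_⟩
  have hle : g ≤ᶠ[nhdsWithin (0:ℝ) (Set.Ioi 0)] h := by
    filter_upwards [self_mem_nhdsWithin] with t (ht : (0:ℝ) < t)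
    exact hgh t ht
  exact le_of_tendsto_of_tendsto htend hhT hle
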